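/- arXiv:1404.1036 — 2 statements merged into one kernel-verified Lean document; each statement's English description precedes it below -/
import Mathlib

section
/- Let μ be a partition of n that does not contain (3,3,3) as a subdiagram. Then for every partition λ of n, every Yamanouchi word w of content λ with inv_μ(w) = 0 does not jam μ; that is, { w ∈ Yam_μ(λ) : inv_μ(w) = 0 } = { w ∈ Yam(λ) : inv_μ(w) = 0 }. -/
open scoped Classical

/-- Swap the values `a` and `b` in a word. -/
def swapVals (a b : ℕ) (w : List ℕ) : List ℕ :=
  w.map fun x => if x = a then b else if x = b then a else x

/-- Elementary dual equivalence `d_i`: acts as the identity if `i` lies (positionally)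
between `i-1` and `i+1`, and otherwise swaps `i` with the outermost of `i-1`, `i+1`. -/
def delem (i : ℕ) (w : List ℕ) : List ℕ :=
  let p := w.idxOf (i - 1)
  let q := w.idxOf i
  let r := w.idxOf (i + 1)
  if (p < q ∧ q < r) ∨ (r < q ∧ q < p) then w
  else if (q < p ∧ p < r) ∨ (r < p ∧ p < q) then swapVals i (i + 1) w
  else swapVals i (i - 1) w

/-- The cyclic replacement `a ↦ b ↦ c ↦ a` on the letters of a word. -/
def cycVals (a b c : ℕ) (w : List ℕ) : List ℕ :=
  w.map fun x => if x = a then b else if x = b then c else if x = c then a else x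

/-- The map `d̃_i`: identity if `i` lies between `i-1` and `i+1`, otherwise it cyclically
permutes the values `i-1, i, i+1` as in Assaf's construction. -/
def dtil (i : ℕ) (w : List ℕ) : List ℕ :=
  let p := w.idxOf (i - 1)
  let q := w.idxOf i
  let r := w.idxOf (i + 1)
  if (p < q ∧ q < r) ∨ (r < q ∧ q < p) then w
  else if q < p ∧ q < r then
    (if p < r then cycVals i (i - 1) (i + 1) w else cycVals i (i + 1) (i - 1) w)
  else
    (if p < r then cycVals (i - 1) i (i + 1) w else cycVals (i + 1) i (i - 1) w)

/-- The standardization of a word: rank letters by value, ties broken left to right. -/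
def stWord (w : List ℕ) : List ℕ :=
  (w.zipIdx.map Prod.swap).map fun p =>
    1 + ((w.zipIdx.map Prod.swap).filter fun q => q.2 < p.2 ∨ (q.2 = p.2 ∧ q.1 < p.1)).length

/-- Unstandardization of a permutation: the value `i` is replaced by
`1 +` the number of `j < i` such that `j+1` occurs before `j`. -/
def unstPerm (π : List ℕ) : List ℕ :=
  π.map fun i =>
    1 + ((List.range (i - 1)).filter fun j => π.idxOf (j + 2) < π.idxOf (j + 1)).length

/-- Unstandardization of a word. -/
def unstWord (w : List ℕ) : List ℕ := unstPerm (stWord w)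

/-- RSK row insertion of a value into a tableau (rows listed bottom row first). -/
def insertTab : List (List ℕ) → ℕ → List (List ℕ)
  | [], x => [[x]]
  | r :: rs, x =>
    match r.findIdx? (fun y => x < y) with
    | none => (r ++ [x]) :: rs
    | some j => r.set j x :: insertTab rs (r.getD j 0)

/-- The RSK insertion tableau of a word. -/
def Ptab (w : List ℕ) : List (List ℕ) := w.foldl insertTab []

def UtabAux : ℕ → List ℕ → List (List ℕ)
  | _, [] => []
  | s, a :: rest => ((List.range a).map (· + s + 1)) :: UtabAux (s + a) rest

/-- The superstandard tableau `U_λ`: `1,…,n` filled along the rows of `λ`, bottom row first. -/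
def Utab (lam : List ℕ) : List (List ℕ) := (UtabAux 0 lam).filter (· ≠ [])

/-- `w` is a Yamanouchi word of content `lam`. -/
def IsYam (lam : List ℕ) (w : List ℕ) : Prop :=
  (∀ x ∈ w, 1 ≤ x) ∧
  (∀ i : ℕ, w.count (i + 1) = lam.getD i 0) ∧
  ∀ t : List ℕ, t <:+ w → ∀ i : ℕ, t.count (i + 2) ≤ t.count (i + 1)

/-- `lam` is a partition: weakly decreasing with positive parts. -/
def IsPartition (lam : List ℕ) : Prop :=
  lam.Pairwise (· ≥ ·) ∧ ∀ a ∈ lam, 0 < a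

/-- Row reading word of a tableau (rows listed bottom first; read top row first). -/
def rwTab (T : List (List ℕ)) : List ℕ := T.reverse.flatten

def fillAux : List ℕ → List ℕ → List (List ℕ)
  | [], _ => []
  | a :: rest, w => w.take a :: fillAux rest (w.drop a)

/-- Fill a shape (row lengths, bottom row first) with a word read in row reading order. -/
def fillTab (sh : List ℕ) (w : List ℕ) : List (List ℕ) := (fillAux sh.reverse w).reverse

/-- `T` is a standard Young tableau of partition shape (rows listed bottom first). -/
def IsSYT (T : List (List ℕ)) : Prop :=
  (T.map List.length).Pairwise (· ≥ ·) ∧ (∀ r ∈ T, r ≠ []) ∧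
  (rwTab T).Perm (List.range' 1 (rwTab T).length) ∧
  (∀ r ∈ T, r.Pairwise (· < ·)) ∧
  ∀ k, k + 1 < T.length → ∀ j < (T.getD (k + 1) []).length,
    (T.getD k []).getD j 0 < (T.getD (k + 1) []).getD j 0

/-- An elementary dual equivalence move on tableaux, via the row reading word. -/
def DEMove (T T' : List (List ℕ)) : Prop :=
  ∃ i, 1 < i ∧ i < (rwTab T).length ∧
    T' = fillTab (T.map List.length) (delem i (rwTab T))

/-- Dual equivalence of tableaux: the equivalence relation generated by the moves `d_i`. -/
def DualEquiv : List (List ℕ) → List (List ℕ) → Prop := Relation.EqvGen DEMove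

/-- Row reading order on cells `(x, y)` of `ℤ × ℤ` (top rows first, left to right). -/
def ReadingOrder (c d : ℤ × ℤ) : Prop := d.2 < c.2 ∨ (c.2 = d.2 ∧ c.1 < d.1)

/-- A diagram, presented as its list of cells in row reading order. -/
def IsDiagramList (δ : List (ℤ × ℤ)) : Prop := δ.Pairwise ReadingOrder

def leRO (c d : ℤ × ℤ) : Prop := c = d ∨ ReadingOrder c d

/-- `e` lies in the pistol of the cell `c`: between `c` and the position one row below `c`. -/
def InPistol (c e : ℤ × ℤ) : Prop := leRO c e ∧ leRO e (c.1, c.2 - 1)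

/-- A set of indices (into the row reading order of `δ`) lies in a common pistol of `δ`. -/
def Pistoled (δ : List (ℤ × ℤ)) (S : List ℕ) : Prop :=
  ∃ c ∈ δ, ∀ i ∈ S, i < δ.length ∧ InPistol c (δ.getD i (0, 0))

/-- The involution `D_i^δ` of Assaf. -/
noncomputable def Ddelta (δ : List (ℤ × ℤ)) (i : ℕ) (π : List ℕ) : List ℕ :=
  if Pistoled δ [π.idxOf (i - 1), π.idxOf i, π.idxOf (i + 1)] then dtil i π
  else delem i π

/-- The cell at index `j` of the filling `T_δ(w)` is a descent. -/
def IsDescentAt (δ : List (ℤ × ℤ)) (w : List ℕ) (j : ℕ) : Prop :=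
  j < δ.length ∧ ∃ k < δ.length,
    δ.getD k (0, 0) = ((δ.getD j (0, 0)).1, (δ.getD j (0, 0)).2 - 1) ∧
    w.getD k 0 < w.getD j 0

/-- The set of descent cells of the filling `T_δ(w)`. -/
def DesSet (δ : List (ℤ × ℤ)) (w : List ℕ) : Set (ℤ × ℤ) :=
  {c | ∃ j, j < δ.length ∧ δ.getD j (0, 0) = c ∧ IsDescentAt δ w j}

/-- Number of cells of `δ` strictly above `c` in its column. -/
def legOf (δ : List (ℤ × ℤ)) (c : ℤ × ℤ) : ℕ :=
  (δ.filter fun e => e.1 = c.1 ∧ c.2 < e.2).length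

/-- The major index statistic `maj_δ`. -/
noncomputable def majD (δ : List (ℤ × ℤ)) (w : List ℕ) : ℕ :=
  ∑ j ∈ Finset.range δ.length,
    if IsDescentAt δ w j then 1 + legOf δ (δ.getD j (0, 0)) else 0

/-- Indices `j < k` form an inversion triple of `T_δ(w)` (with the cell below `j`). -/
def InvTripleAt (δ : List (ℤ × ℤ)) (w : List ℕ) (j k : ℕ) : Prop :=
  j < k ∧ k < δ.length ∧
  (δ.getD j (0, 0)).2 = (δ.getD k (0, 0)).2 ∧
  ∃ m < δ.length, δ.getD m (0, 0) = ((δ.getD j (0, 0)).1, (δ.getD j (0, 0)).2 - 1) ∧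
    ((w.getD m 0 < w.getD k 0 ∧ w.getD k 0 < w.getD j 0) ∨
     (w.getD j 0 ≤ w.getD m 0 ∧ w.getD m 0 < w.getD k 0) ∨
     (w.getD k 0 < w.getD j 0 ∧ w.getD j 0 ≤ w.getD m 0))

/-- Inversion pair where the cell below the left cell is missing. -/
def InvPairBelowAt (δ : List (ℤ × ℤ)) (w : List ℕ) (j k : ℕ) : Prop :=
  j < k ∧ k < δ.length ∧
  (δ.getD j (0, 0)).2 = (δ.getD k (0, 0)).2 ∧
  ((δ.getD j (0, 0)).1, (δ.getD j (0, 0)).2 - 1) ∉ δ ∧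
  w.getD k 0 < w.getD j 0

/-- Inversion pair where the upper-left cell of the triple is missing. -/
def InvPairAboveAt (δ : List (ℤ × ℤ)) (w : List ℕ) (k m : ℕ) : Prop :=
  k < δ.length ∧ m < δ.length ∧
  (δ.getD k (0, 0)).2 = (δ.getD m (0, 0)).2 + 1 ∧
  (δ.getD m (0, 0)).1 < (δ.getD k (0, 0)).1 ∧
  ((δ.getD m (0, 0)).1, (δ.getD m (0, 0)).2 + 1) ∉ δ ∧
  w.getD m 0 < w.getD k 0

/-- The inversion statistic `inv_δ(w)`: inversion triples plus inversion pairs. -/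
noncomputable def invD (δ : List (ℤ × ℤ)) (w : List ℕ) : ℕ :=
  ((Finset.range δ.length ×ˢ Finset.range δ.length).filter fun p =>
      InvTripleAt δ w p.1 p.2).card +
  ((Finset.range δ.length ×ˢ Finset.range δ.length).filter fun p =>
      InvPairBelowAt δ w p.1 p.2).card +
  ((Finset.range δ.length ×ˢ Finset.range δ.length).filter fun p =>
      InvPairAboveAt δ w p.1 p.2).card

/-- The cells of the (French) partition diagram of `lam`, in row reading order. -/
def partitionDiagram (lam : List ℕ) : List (ℤ × ℤ) :=
  ((List.range lam.length).reverse.map fun r =>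
    (List.range (lam.getD r 0)).map fun x => ((x : ℤ), (r : ℤ))).flatten

/-- Index (in `w`) of the `j`-th from last occurrence of the value `v` (`j ≥ 1`). -/
def posFromLast (w : List ℕ) (v j : ℕ) : ℕ :=
  (((List.range w.length).filter fun p => w.getD p 0 = v).reverse).getD (j - 1) 0

/-- A Yamanouchi word `w` jams the diagram `δ`. -/
def Jams (δ : List (ℤ × ℤ)) (w : List ℕ) : Prop :=
  ∃ i j : ℕ, 1 ≤ i ∧ 1 ≤ j ∧ j ≤ w.count i ∧ j + 1 ≤ w.count (i + 1) ∧
    Pistoled δ [posFromLast w i j, posFromLast w (i + 1) (j + 1)]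

/-- `p` occurs as a strict pattern of `π` at the (increasing) index list `idx`. -/
def StrictPatternAt (p : List ℕ) (π : List ℕ) (idx : List ℕ) : Prop :=
  idx.Pairwise (· < ·) ∧ (∀ i ∈ idx, i < π.length) ∧ idx.length = p.length ∧
  ∃ k : ℕ, ∀ j < p.length, π.getD (idx.getD j 0) 0 = p.getD j 0 + k

/-- `γ` is a realizable descent set of `δ`. -/
def RealizableIn (γ : Finset (ℤ × ℤ)) (δ : List (ℤ × ℤ)) : Prop :=
  (∀ c ∈ γ, ((c.1, c.2 - 1) : ℤ × ℤ) ∈ δ) ∧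
  ∀ x₁ x₂ lo hi : ℤ, x₁ < x₂ → lo < hi →
    ((x₁, hi) : ℤ × ℤ) ∉ γ → ((x₁, lo) : ℤ × ℤ) ∉ γ →
    (∀ j, lo < j → j < hi → ((x₁, j) : ℤ × ℤ) ∈ γ) →
    ¬ ∀ j, lo < j → j ≤ hi → ((x₂, j) : ℤ × ℤ) ∈ γ

/-- Value of the leading filling at a cell: `1` plus the length of the maximal run of
cells of `γ` weakly below `c` in its column, i.e. `1` off a non-`γ` cell, and one plus
the value below on cells of `γ`. -/
noncomputable def wval (γ : Finset (ℤ × ℤ)) (c : ℤ × ℤ) : ℕ :=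
  1 + ((Finset.range γ.card).filter fun m =>
    ∀ l ≤ m, ((c.1, c.2 - (l : ℤ)) : ℤ × ℤ) ∈ γ).card

namespace No333


lemma count_drop_le (w : List ℕ) (v : ℕ) {a b : ℕ} (h : a ≤ b) :
    (w.drop b).count v ≤ (w.drop a).count v := by
  have hb : w.drop b = (w.drop a).drop (b - a) := by
    rw [List.drop_drop]; congr 1; omega
  rw [hb]
  exact (List.drop_sublist _ _).count_le v

lemma count_drop_succ (w : List ℕ) (v : ℕ) {p : ℕ} (hp : p < w.length) :
    (w.drop p).count v = (if w.getD p 0 = v then 1 else 0) + (w.drop (p+1)).count v := by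
  rw [List.drop_eq_getElem_cons hp, List.count_cons, List.getD_eq_getElem _ _ hp]
  by_cases h : w[p] = v
  · simp [h]; omega
  · simp [h]

def idxList (w : List ℕ) (v p : ℕ) : List ℕ :=
  (List.range' p (w.length - p)).filter fun k => w.getD k 0 = v

lemma idxList_stop (w : List ℕ) (v p : ℕ) (h : w.length ≤ p) : idxList w v p = [] := by
  unfold idxList
  rw [show w.length - p = 0 by omega]
  rfl

lemma idxList_step (w : List ℕ) (v p : ℕ) (h : p < w.length) :
    idxList w v p = if w.getD p 0 = v then p :: idxList w v (p+1) else idxList w v (p+1) := by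
  unfold idxList
  rw [show w.length - p = (w.length - (p+1)) + 1 by omega, List.range'_succ, List.filter_cons]
  by_cases hv : w.getD p 0 = v
  · simp [hv]
  · simp [hv]

lemma idxList_spec (w : List ℕ) (v : ℕ) : ∀ d p, w.length - p = d →
    (w.drop p).count v = (idxList w v p).length ∧
    ∀ idx, idx < (idxList w v p).length →
      ((idxList w v p).getD idx 0 < w.length ∧ p ≤ (idxList w v p).getD idx 0) ∧
      w.getD ((idxList w v p).getD idx 0) 0 = v ∧
      (w.drop ((idxList w v p).getD idx 0)).count v = (idxList w v p).length - idx := by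
  intro d
  induction d with
  | zero =>
    intro p hp
    have h1 : w.length ≤ p := by omega
    rw [idxList_stop w v p h1, List.drop_eq_nil_of_le h1]
    exact ⟨rfl, by intro idx h; simp at h⟩
  | succ d ih =>
    intro p hp
    have hplt : p < w.length := by omega
    have IH := ih (p+1) (by omega)
    rw [idxList_step w v p hplt, count_drop_succ w v hplt]
    by_cases hv : w.getD p 0 = v
    · rw [if_pos hv, if_pos hv]
      constructor
      · simp [IH.1]; omega
      · intro idx hidx
        match idx with
        | 0 =>
          refine ⟨⟨hplt, le_refl p⟩, by simpa using hv, ?_⟩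
          simp only [List.getD_cons_zero, List.length_cons]
          rw [count_drop_succ w v hplt, if_pos hv]
          omega
        | (idx'+1) =>
          simp only [List.getD_cons_succ, List.length_cons]
          have hidx' : idx' < (idxList w v (p+1)).length := by
            simp at hidx; omega
          obtain ⟨⟨hb1, hb2⟩, hb3, hb4⟩ := IH.2 idx' hidx'
          exact ⟨⟨hb1, by omega⟩, hb3, by omega⟩
    · rw [if_neg hv, if_neg hv]
      refine ⟨by simpa using IH.1, ?_⟩
      intro idx hidx
      obtain ⟨⟨hb1, hb2⟩, hb3, hb4⟩ := IH.2 idx hidx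
      exact ⟨⟨hb1, by omega⟩, hb3, hb4⟩

lemma idxList_zero (w : List ℕ) (v : ℕ) :
    ((List.range w.length).filter fun p => w.getD p 0 = v) = idxList w v 0 := by
  unfold idxList
  rw [List.range_eq_range']
  norm_num

lemma count_eq_idxList_len (w : List ℕ) (v : ℕ) : w.count v = (idxList w v 0).length := by
  have := (idxList_spec w v w.length 0 (by omega)).1
  rwa [List.drop_zero] at this

lemma posFromLast_spec (w : List ℕ) (v s : ℕ) (h1 : 1 ≤ s) (h2 : s ≤ w.count v) :
    posFromLast w v s < w.length ∧ w.getD (posFromLast w v s) 0 = v ∧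
      (w.drop (posFromLast w v s)).count v = s := by
  have hspec := idxList_spec w v w.length 0 (by omega)
  have hm : (idxList w v 0).length = w.count v := (count_eq_idxList_len w v).symm
  have hpos : posFromLast w v s = (idxList w v 0).getD ((idxList w v 0).length - s) 0 := by
    unfold posFromLast
    rw [idxList_zero]
    have hlt : s - 1 < (idxList w v 0).reverse.length := by
      rw [List.length_reverse]; omega
    rw [List.getD_eq_getElem _ _ hlt, List.getElem_reverse,
      List.getD_eq_getElem _ _ (show (idxList w v 0).length - s < (idxList w v 0).length by omega)]
    congr 1
    omega
  rw [hpos]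
  obtain ⟨⟨hb1, _⟩, hb3, hb4⟩ := hspec.2 ((idxList w v 0).length - s) (by omega)
  exact ⟨hb1, hb3, by omega⟩

lemma posFromLast_eq (w : List ℕ) (v : ℕ) {k : ℕ} (hk : k < w.length) (hv : w.getD k 0 = v) :
    posFromLast w v ((w.drop k).count v) = k := by
  set t := (w.drop k).count v with ht
  have htpos : 1 ≤ t := by
    rw [ht, count_drop_succ w v hk, if_pos hv]; omega
  have htle : t ≤ w.count v := by
    have := count_drop_le w v (Nat.zero_le k)
    rwa [List.drop_zero] at this
  obtain ⟨h1, h2, h3⟩ := posFromLast_spec w v t htpos htle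
  set p := posFromLast w v t with hp
  rcases lt_trichotomy p k with h | h | h
  · exfalso
    have hc := count_drop_le w v (show p+1 ≤ k by omega)
    rw [count_drop_succ w v h1, if_pos h2] at h3
    omega
  · exact h
  · exfalso
    have hc := count_drop_le w v (show k+1 ≤ p by omega)
    rw [count_drop_succ w v hk, if_pos hv] at ht
    omega

lemma posFromLast_lt (w : List ℕ) (v : ℕ) {s s' : ℕ} (h1 : 1 ≤ s) (h2 : s < s')
    (h3 : s' ≤ w.count v) : posFromLast w v s' < posFromLast w v s := by
  obtain ⟨ha1, ha2, ha3⟩ := posFromLast_spec w v s h1 (by omega)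
  obtain ⟨hb1, hb2, hb3⟩ := posFromLast_spec w v s' (by omega) h3
  set p := posFromLast w v s
  set q := posFromLast w v s'
  rcases lt_trichotomy q p with h | h | h
  · exact h
  · exfalso; rw [h] at hb3; omega
  · exfalso
    have hc := count_drop_le w v (show p+1 ≤ q by omega)
    rw [count_drop_succ w v ha1, if_pos ha2] at ha3
    omega

lemma posFromLast_le (w : List ℕ) (v : ℕ) {s s' : ℕ} (h1 : 1 ≤ s) (h2 : s ≤ s')
    (h3 : s' ≤ w.count v) : posFromLast w v s' ≤ posFromLast w v s := by
  rcases eq_or_lt_of_le h2 with rfl | h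
  · exact le_refl _
  · exact le_of_lt (posFromLast_lt w v h1 h h3)




lemma yam_suffix_count {lam' w : List ℕ} (hyam : IsYam lam' w) (v p : ℕ) (hv : 2 ≤ v) :
    (w.drop p).count v ≤ (w.drop p).count (v-1) := by
  have := hyam.2.2 (w.drop p) (List.drop_suffix p w) (v-2)
  rwa [show v-2+2 = v by omega, show v-2+1 = v-1 by omega] at this

lemma yam_ge_one {lam' w : List ℕ} (hyam : IsYam lam' w) {k : ℕ} (hk : k < w.length) :
    1 ≤ w.getD k 0 := by
  apply hyam.1
  rw [List.getD_eq_getElem _ _ hk]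
  exact List.getElem_mem hk

lemma yam_next_smaller {lam' w : List ℕ} (hyam : IsYam lam' w) {k : ℕ} (hk : k < w.length)
    (h2 : 2 ≤ w.getD k 0) :
    ∃ k', k < k' ∧ k' < w.length ∧ w.getD k' 0 = w.getD k 0 - 1 := by
  set v := w.getD k 0 with hv
  have hc1 : 1 ≤ (w.drop k).count v := by
    rw [List.drop_eq_getElem_cons hk, List.count_cons]
    have hkv : w[k] = v := by rw [← List.getD_eq_getElem w 0 hk]
    simp [hkv]
  have hc2 : 1 ≤ (w.drop k).count (v-1) := le_trans hc1 (yam_suffix_count hyam v k h2)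
  have hmem : (v-1) ∈ w.drop k := by
    rw [← List.count_pos_iff]
    omega
  obtain ⟨m, hm, hmeq⟩ := List.getElem_of_mem hmem
  have hlen : (w.drop k).length = w.length - k := List.length_drop
  have hget : w.getD (k + m) 0 = v - 1 := by
    rw [List.getD_eq_getElem _ _ (by omega), ← List.getElem_drop]
    · exact hmeq
  have hm0 : m ≠ 0 := by
    intro h0
    subst h0
    rw [show k + 0 = k by omega] at hget
    omega
  exact ⟨k + m, by omega, by omega, hget⟩


def rowL (y r : ℕ) : List (ℤ × ℤ) := (List.range y).map (fun x : ℕ => ((x:ℤ), (r:ℤ)))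

lemma rowL_length (y r : ℕ) : (rowL y r).length = y := by
  simp [rowL]

lemma pd_def (lam : List ℕ) : partitionDiagram lam =
    ((List.range lam.length).reverse.map fun r => rowL (lam.getD r 0) r).flatten := by
  unfold partitionDiagram rowL
  congr 1
  apply List.map_congr_left
  intro r _
  rw [bind_pure_comp]
  simp

lemma pd_concat (ys : List ℕ) (y : ℕ) :
    partitionDiagram (ys ++ [y]) = rowL y ys.length ++ partitionDiagram ys := by
  rw [pd_def, pd_def]
  rw [List.length_append, List.length_singleton, List.range_succ, List.reverse_append]
  simp only [List.reverse_singleton, List.singleton_append, List.map_cons, List.flatten_cons]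
  congr 1
  · congr 1
    rw [List.getD_append_right _ _ _ _ (le_refl ys.length)]
    simp
  · congr 1
    apply List.map_congr_left
    intro r hr
    rw [List.mem_reverse, List.mem_range] at hr
    rw [List.getD_append _ _ _ _ hr]

lemma pd_length (lam : List ℕ) : (partitionDiagram lam).length = lam.sum := by
  induction lam using List.reverseRecOn with
  | nil => simp [partitionDiagram]
  | append_singleton ys y ih =>
    rw [pd_concat, List.length_append, ih, rowL_length, List.sum_append]
    simp [Nat.add_comm]

lemma rowL_getD (y r x : ℕ) (hx : x < y) : (rowL y r).getD x (0,0) = ((x:ℤ), (r:ℤ)) := by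
  rw [rowL, List.getD_eq_getElem _ _ (by simpa using hx)]
  simp

lemma pd_getD (lam : List ℕ) : ∀ r x : ℕ, r < lam.length → x < lam.getD r 0 →
    (partitionDiagram lam).getD ((lam.drop (r+1)).sum + x) (0,0) = ((x:ℤ), (r:ℤ)) := by
  induction lam using List.reverseRecOn with
  | nil => intro r x hr; simp at hr
  | append_singleton ys y ih =>
    intro r x hr hx
    rw [pd_concat]
    rcases Nat.lt_or_ge r ys.length with h | h
    · have hgd : (ys ++ [y]).getD r 0 = ys.getD r 0 := List.getD_append _ _ _ _ h
      rw [hgd] at hx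
      have hdrop : ((ys ++ [y]).drop (r+1)).sum = (ys.drop (r+1)).sum + y := by
        rw [List.drop_append_of_le_length (by omega), List.sum_append]
        simp
      rw [hdrop]
      rw [List.getD_append_right _ _ _ _ (by rw [rowL_length]; omega)]
      rw [rowL_length]
      rw [show (ys.drop (r+1)).sum + y + x - y = (ys.drop (r+1)).sum + x by omega]
      exact ih r x h hx
    · have hreq : r = ys.length := by
        rw [List.length_append, List.length_singleton] at hr; omega
      subst hreq
      have hgd : (ys ++ [y]).getD ys.length 0 = y := by
        rw [List.getD_append_right _ _ _ _ (le_refl ys.length)]; simp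
      rw [hgd] at hx
      have hdrop : ((ys ++ [y]).drop (ys.length+1)).sum = 0 := by
        rw [List.drop_eq_nil_of_le (by simp)]; rfl
      rw [hdrop, Nat.zero_add]
      rw [List.getD_append _ _ _ _ (by rw [rowL_length]; omega)]
      exact rowL_getD y ys.length x hx

lemma pd_index (lam : List ℕ) : ∀ k, k < lam.sum →
    ∃ r x : ℕ, r < lam.length ∧ x < lam.getD r 0 ∧ k = (lam.drop (r+1)).sum + x := by
  induction lam using List.reverseRecOn with
  | nil => intro k hk; simp at hk
  | append_singleton ys y ih =>
    intro k hk
    rw [List.sum_append, List.sum_singleton] at hk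
    rcases Nat.lt_or_ge k y with h | h
    · refine ⟨ys.length, k, by simp, ?_, ?_⟩
      · rw [List.getD_append_right _ _ _ _ (le_refl ys.length)]; simpa
      · rw [List.drop_eq_nil_of_le (by simp)]; simp
    · obtain ⟨r, x, hr, hx, hk'⟩ := ih (k - y) (by omega)
      refine ⟨r, x, by rw [List.length_append, List.length_singleton]; omega, ?_, ?_⟩
      · rwa [List.getD_append _ _ _ _ hr]
      · rw [List.drop_append_of_le_length (by omega), List.sum_append, List.sum_singleton]
        omega

lemma pd_mem (lam : List ℕ) (c : ℤ × ℤ) :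
    c ∈ partitionDiagram lam ↔
      ∃ r x : ℕ, r < lam.length ∧ x < lam.getD r 0 ∧ c = ((x:ℤ), (r:ℤ)) := by
  rw [pd_def]
  simp only [List.mem_flatten, List.mem_map, List.mem_reverse, List.mem_range, rowL]
  constructor
  · rintro ⟨l, ⟨r, hr, rfl⟩, hc⟩
    simp only [List.mem_map, List.mem_range] at hc
    obtain ⟨x, hx, hxc⟩ := hc
    exact ⟨r, x, hr, hx, hxc.symm⟩
  · rintro ⟨r, x, hr, hx, rfl⟩
    refine ⟨_, ⟨r, hr, rfl⟩, ?_⟩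
    simp only [List.mem_map, List.mem_range]
    exact ⟨x, hx, rfl⟩

lemma sum_drop_anti (lam : List ℕ) {a b : ℕ} (h : a ≤ b) :
    (lam.drop b).sum ≤ (lam.drop a).sum := by
  conv_rhs => rw [← List.take_append_drop (b - a) (lam.drop a)]
  rw [List.sum_append, List.drop_drop, show a + (b - a) = b by omega]
  omega

lemma off_eq (lam : List ℕ) {r : ℕ} (hr : r < lam.length) :
    (lam.drop r).sum = lam.getD r 0 + (lam.drop (r+1)).sum := by
  rw [List.drop_eq_getElem_cons hr, List.sum_cons, List.getD_eq_getElem _ _ hr]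

lemma sum_drop_le (lam : List ℕ) (r : ℕ) : (lam.drop r).sum ≤ lam.sum := by
  have := sum_drop_anti lam (Nat.zero_le r)
  rwa [List.drop_zero] at this

lemma idx_bound (lam : List ℕ) {r x : ℕ} (hr : r < lam.length) (hx : x < lam.getD r 0) :
    (lam.drop (r+1)).sum + x < lam.sum := by
  have h1 := off_eq lam hr
  have h2 := sum_drop_le lam r
  omega

lemma idx_lt_iff (lam : List ℕ) {r x r' x' : ℕ} (hr : r < lam.length) (hx : x < lam.getD r 0)
    (hr' : r' < lam.length) (hx' : x' < lam.getD r' 0) :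
    ((lam.drop (r+1)).sum + x < (lam.drop (r'+1)).sum + x' ↔ (r' < r ∨ (r' = r ∧ x < x'))) := by
  have key : ∀ a b : ℕ, a < lam.length → b < a → ∀ u u' : ℕ, u < lam.getD a 0 →
      (lam.drop (a+1)).sum + u < (lam.drop (b+1)).sum + u' := by
    intro a b ha hba u u' hu
    have h1 := off_eq lam ha
    have h2 := sum_drop_anti lam (show b+1 ≤ a by omega)
    omega
  constructor
  · intro h
    rcases lt_trichotomy r r' with hc | hc | hc
    · exfalso
      have := key r' r hr' hc x' x hx'
      omega
    · subst hc
      right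
      exact ⟨rfl, by omega⟩
    · exact Or.inl hc
  · intro h
    rcases h with hc | ⟨rfl, hc⟩
    · exact key r r' hr hc x x' hx
    · omega

lemma mu_anti {lam : List ℕ} (hlam : IsPartition lam) {r r' : ℕ} (h : r ≤ r')
    (hr' : r' < lam.length) : lam.getD r' 0 ≤ lam.getD r 0 := by
  rcases eq_or_lt_of_le h with rfl | h
  · exact le_refl _
  · have hp := List.pairwise_iff_getElem.mp (hlam.1 : lam.Pairwise (· ≥ ·)) r r' (by omega) hr' h
    rw [List.getD_eq_getElem _ _ hr', List.getD_eq_getElem _ _ (show r < lam.length by omega)]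
    exact hp

lemma inPistol_iff (xh rh x r : ℕ) :
    InPistol ((xh:ℤ), (rh:ℤ)) ((x:ℤ), (r:ℤ)) ↔
      ((r = rh ∧ xh ≤ x) ∨ (r + 1 = rh ∧ x ≤ xh)) := by
  simp [InPistol, leRO, ReadingOrder, Prod.ext_iff]
  omega


lemma yam_interlace {lam' w : List ℕ} (hyam : IsYam lam' w) (i s : ℕ) (hi : 1 ≤ i) (hs : 1 ≤ s)
    (hcnt : s ≤ w.count (i+1)) (hcnt' : s ≤ w.count i) :
    posFromLast w (i+1) s < posFromLast w i s := by
  obtain ⟨hu1, hu2, hu3⟩ := posFromLast_spec w (i+1) s hs hcnt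
  obtain ⟨hv1, hv2, hv3⟩ := posFromLast_spec w i s hs hcnt'
  set u := posFromLast w (i+1) s with hu
  set v := posFromLast w i s with hv
  have hyc : (w.drop u).count (i+1) ≤ (w.drop u).count i := by
    have := yam_suffix_count hyam (i+1) u (by omega)
    simpa using this
  rcases lt_trichotomy u v with h | h | h
  · exact h
  · exfalso
    have : (i:ℕ) + 1 = i := by rw [← hu2, ← hv2, h]
    omega
  · exfalso
    have hc := count_drop_le w i (show v+1 ≤ u by omega)
    have hv3' : (w.drop (v+1)).count i + 1 = s := by
      rw [count_drop_succ w i hv1, if_pos hv2] at hv3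
      omega
    omega

lemma no_jam_aux (lam lam' : List ℕ) (hlam : IsPartition lam) (h333 : lam.getD 2 0 < 3)
    (w : List ℕ) (hlen : w.length = lam.sum) (hyam : IsYam lam' w)
    (hinv : invD (partitionDiagram lam) w = 0) :
    ∀ j i : ℕ, 1 ≤ i → 1 ≤ j → j ≤ w.count i → j + 1 ≤ w.count (i+1) →
      ¬ Pistoled (partitionDiagram lam) [posFromLast w i j, posFromLast w (i+1) (j+1)] := by
  set δ := partitionDiagram lam with hδdef
  have hδlen : δ.length = lam.sum := pd_length lam
  -- kill all inversion triples / pairs-below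
  have hcard1 : ((Finset.range δ.length ×ˢ Finset.range δ.length).filter fun p =>
      InvTripleAt δ w p.1 p.2).card = 0 := by
    unfold invD at hinv; omega
  have hcard2 : ((Finset.range δ.length ×ˢ Finset.range δ.length).filter fun p =>
      InvPairBelowAt δ w p.1 p.2).card = 0 := by
    unfold invD at hinv; omega
  have noTriple : ∀ a b : ℕ, a < δ.length → b < δ.length → ¬ InvTripleAt δ w a b := by
    intro a b ha hb hT
    rw [Finset.card_eq_zero] at hcard1
    have hmem : ((a,b) : ℕ × ℕ) ∈ (Finset.range δ.length ×ˢ Finset.range δ.length).filter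
        (fun p => InvTripleAt δ w p.1 p.2) :=
      Finset.mem_filter.mpr ⟨Finset.mem_product.mpr
        ⟨Finset.mem_range.mpr ha, Finset.mem_range.mpr hb⟩, hT⟩
    rw [hcard1] at hmem
    exact absurd hmem (Finset.notMem_empty _)
  have noBelow : ∀ a b : ℕ, a < δ.length → b < δ.length → ¬ InvPairBelowAt δ w a b := by
    intro a b ha hb hT
    rw [Finset.card_eq_zero] at hcard2
    have hmem : ((a,b) : ℕ × ℕ) ∈ (Finset.range δ.length ×ˢ Finset.range δ.length).filter
        (fun p => InvPairBelowAt δ w p.1 p.2) :=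
      Finset.mem_filter.mpr ⟨Finset.mem_product.mpr
        ⟨Finset.mem_range.mpr ha, Finset.mem_range.mpr hb⟩, hT⟩
    rw [hcard2] at hmem
    exact absurd hmem (Finset.notMem_empty _)
  -- row 0 is weakly increasing
  have hrow0mono : ∀ x x' : ℕ, x < x' → x' < lam.getD 0 0 →
      w.getD ((lam.drop (0+1)).sum + x) 0 ≤ w.getD ((lam.drop (0+1)).sum + x') 0 := by
    intro x x' hxx hx'
    have h0L : 0 < lam.length := by
      by_contra h0
      rw [List.getD_eq_default _ _ (by omega)] at hx'
      omega
    have hx0 : x < lam.getD 0 0 := by omega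
    by_contra hlt
    apply noBelow ((lam.drop (0+1)).sum + x) ((lam.drop (0+1)).sum + x')
      (by rw [hδlen]; exact idx_bound lam h0L hx0)
      (by rw [hδlen]; exact idx_bound lam h0L hx')
    have hgj : δ.getD ((lam.drop (0+1)).sum + x) (0,0) = ((x:ℤ), ((0:ℕ):ℤ)) :=
      pd_getD lam 0 x h0L hx0
    have hgk : δ.getD ((lam.drop (0+1)).sum + x') (0,0) = ((x':ℤ), ((0:ℕ):ℤ)) :=
      pd_getD lam 0 x' h0L hx'
    refine ⟨by omega, by rw [hδlen]; exact idx_bound lam h0L hx', by rw [hgj, hgk], ?_, by omega⟩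
    rw [hgj]
    intro hmem
    rw [pd_mem] at hmem
    obtain ⟨r'', x'', _, _, heq⟩ := hmem
    simp only [Prod.ext_iff, Prod.mk.injEq] at heq
    omega
  -- every entry of row 0 equals 1
  have val0 : ∀ x : ℕ, x < lam.getD 0 0 → w.getD ((lam.drop (0+1)).sum + x) 0 = 1 := by
    intro x hx
    have h0L : 0 < lam.length := by
      by_contra h0
      rw [List.getD_eq_default _ _ (by omega)] at hx
      omega
    have hb : (lam.drop (0+1)).sum + x < lam.sum := idx_bound lam h0L hx
    have hge : 1 ≤ w.getD ((lam.drop (0+1)).sum + x) 0 :=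
      yam_ge_one hyam (by rw [hlen]; exact hb)
    by_contra hne
    have h2 : 2 ≤ w.getD ((lam.drop (0+1)).sum + x) 0 := by omega
    obtain ⟨k', hk1, hk2, hk3⟩ := yam_next_smaller hyam (by rw [hlen]; exact hb) h2
    obtain ⟨r'', x'', hr'', hx'', hkeq⟩ := pd_index lam k' (by rw [← hlen]; exact hk2)
    rw [hkeq] at hk1
    have hcoord := (idx_lt_iff lam h0L hx hr'' hx'').mp hk1
    have hr0 : r'' = 0 := by omega
    subst hr0
    have hxx : x < x'' := by omega
    have := hrow0mono x x'' hxx hx''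
    rw [hkeq] at hk3
    omega
  -- triple-forcing facts in rows 1/0
  have hF1 : ∀ i x x' : ℕ, x < x' → x' < lam.getD 1 0 →
      w.getD ((lam.drop (1+1)).sum + x) 0 = i + 1 →
      w.getD ((lam.drop (1+1)).sum + x') 0 = i →
      w.getD ((lam.drop (0+1)).sum + x) 0 = i := by
    intro i x x' hxx hx' ha hb
    have h1L : 1 < lam.length := by
      by_contra h0
      rw [List.getD_eq_default _ _ (by omega)] at hx'
      omega
    have hx1 : x < lam.getD 1 0 := by omega
    have hx0 : x < lam.getD 0 0 := lt_of_lt_of_le hx1 (mu_anti hlam (by omega) h1L)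
    by_contra hne
    apply noTriple ((lam.drop (1+1)).sum + x) ((lam.drop (1+1)).sum + x')
      (by rw [hδlen]; exact idx_bound lam h1L hx1)
      (by rw [hδlen]; exact idx_bound lam h1L hx')
    have hgj : δ.getD ((lam.drop (1+1)).sum + x) (0,0) = ((x:ℤ), ((1:ℕ):ℤ)) :=
      pd_getD lam 1 x h1L hx1
    have hgk : δ.getD ((lam.drop (1+1)).sum + x') (0,0) = ((x':ℤ), ((1:ℕ):ℤ)) :=
      pd_getD lam 1 x' h1L hx'
    have hgm : δ.getD ((lam.drop (0+1)).sum + x) (0,0) = ((x:ℤ), ((0:ℕ):ℤ)) :=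
      pd_getD lam 0 x (by omega) hx0
    refine ⟨by omega, by rw [hδlen]; exact idx_bound lam h1L hx', by rw [hgj, hgk], ?_⟩
    refine ⟨(lam.drop (0+1)).sum + x, by rw [hδlen]; exact idx_bound lam (by omega) hx0, ?_, ?_⟩
    · rw [hgm, hgj]
      simp [Prod.ext_iff]
    · rw [ha, hb]
      omega
  have hF2 : ∀ i x x' : ℕ, x < x' → x' < lam.getD 1 0 →
      w.getD ((lam.drop (1+1)).sum + x) 0 = i →
      w.getD ((lam.drop (1+1)).sum + x') 0 = i + 1 →
      w.getD ((lam.drop (0+1)).sum + x) 0 ≠ i := by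
    intro i x x' hxx hx' ha hb heq
    have h1L : 1 < lam.length := by
      by_contra h0
      rw [List.getD_eq_default _ _ (by omega)] at hx'
      omega
    have hx1 : x < lam.getD 1 0 := by omega
    have hx0 : x < lam.getD 0 0 := lt_of_lt_of_le hx1 (mu_anti hlam (by omega) h1L)
    apply noTriple ((lam.drop (1+1)).sum + x) ((lam.drop (1+1)).sum + x')
      (by rw [hδlen]; exact idx_bound lam h1L hx1)
      (by rw [hδlen]; exact idx_bound lam h1L hx')
    have hgj : δ.getD ((lam.drop (1+1)).sum + x) (0,0) = ((x:ℤ), ((1:ℕ):ℤ)) :=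
      pd_getD lam 1 x h1L hx1
    have hgk : δ.getD ((lam.drop (1+1)).sum + x') (0,0) = ((x':ℤ), ((1:ℕ):ℤ)) :=
      pd_getD lam 1 x' h1L hx'
    have hgm : δ.getD ((lam.drop (0+1)).sum + x) (0,0) = ((x:ℤ), ((0:ℕ):ℤ)) :=
      pd_getD lam 0 x (by omega) hx0
    refine ⟨by omega, by rw [hδlen]; exact idx_bound lam h1L hx', by rw [hgj, hgk], ?_⟩
    refine ⟨(lam.drop (0+1)).sum + x, by rw [hδlen]; exact idx_bound lam (by omega) hx0, ?_, ?_⟩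
    · rw [hgm, hgj]
      simp [Prod.ext_iff]
    · rw [ha, hb, heq]
      omega
  -- main strong induction on j
  intro j
  induction j using Nat.strong_induction_on with
  | _ j IH =>
  intro i hi hj hcnti hcnti1 hpist
  have hIci : w.count (i+1) ≤ w.count i := by
    have := yam_suffix_count hyam (i+1) 0 (by omega)
    rw [List.drop_zero] at this
    simpa using this
  obtain ⟨hQ1, hQ2, hQ3⟩ := posFromLast_spec w (i+1) (j+1) (by omega) hcnti1
  obtain ⟨hP1, hP2, hP3⟩ := posFromLast_spec w i j hj hcnti
  obtain ⟨hP'1, hP'2, hP'3⟩ := posFromLast_spec w i (j+1) (by omega) (by omega)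
  obtain ⟨hR1, hR2, hR3⟩ := posFromLast_spec w (i+1) j hj (by omega)
  have hQP' := yam_interlace hyam i (j+1) hi (by omega) hcnti1 (by omega)
  have hP'P := posFromLast_lt w i hj (show j < j + 1 by omega) (by omega)
  have hQR := posFromLast_lt w (i+1) hj (show j < j + 1 by omega) hcnti1
  have hRP := yam_interlace hyam i j hi (by omega) (by omega) hcnti
  set Q := posFromLast w (i+1) (j+1) with hQdef
  set P := posFromLast w i j with hPdef
  set P' := posFromLast w i (j+1) with hP'def
  set R := posFromLast w (i+1) j with hRdef
  have hP'R : P' ≠ R := by intro h; rw [h] at hP'2; omega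
  -- unpack pistol
  obtain ⟨c, hcmem, hall⟩ := hpist
  have hPp := hall P (by simp)
  have hQp := hall Q (by simp)
  obtain ⟨rh, xh, hrhL, hxh, hceq⟩ := (pd_mem lam c).mp hcmem
  obtain ⟨rQ, xQ, hrQ, hxQ, hQeq⟩ := pd_index lam Q (by rw [← hlen]; exact hQ1)
  obtain ⟨rP, xP, hrP, hxP, hPeq⟩ := pd_index lam P (by rw [← hlen]; exact hP1)
  have hgQ : δ.getD Q (0,0) = ((xQ:ℤ), (rQ:ℤ)) := by
    rw [hQeq]; exact pd_getD lam rQ xQ hrQ hxQ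
  have hgP : δ.getD P (0,0) = ((xP:ℤ), (rP:ℤ)) := by
    rw [hPeq]; exact pd_getD lam rP xP hrP hxP
  have hQchar : (rQ = rh ∧ xh ≤ xQ) ∨ (rQ + 1 = rh ∧ xQ ≤ xh) := by
    have h := hQp.2
    rw [hceq, hgQ] at h
    exact (inPistol_iff xh rh xQ rQ).mp h
  have hPchar : (rP = rh ∧ xh ≤ xP) ∨ (rP + 1 = rh ∧ xP ≤ xh) := by
    have h := hPp.2
    rw [hceq, hgP] at h
    exact (inPistol_iff xh rh xP rP).mp h
  rcases Nat.lt_or_ge rh 2 with hrh2 | hrh2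
  swap
  · -- pistol rooted in a short row: at most 3 cells, but Q < {P', R} < P needs 4
    have hmu2 : lam.getD rh 0 ≤ 2 := by
      have h1 := mu_anti hlam hrh2 hrhL
      omega
    have hoff : (lam.drop rh).sum = lam.getD rh 0 + (lam.drop (rh+1)).sum := off_eq lam hrhL
    have hQlo : (lam.drop (rh+1)).sum + xh ≤ Q := by
      rcases hQchar with ⟨h1, h2⟩ | ⟨h1, h2⟩
      · rw [hQeq, h1]; omega
      · have : (lam.drop (rQ+1)).sum = (lam.drop rh).sum := by rw [← h1]
        rw [hQeq, this]; omega
    have hPhi : P ≤ (lam.drop rh).sum + xh := by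
      rcases hPchar with ⟨h1, h2⟩ | ⟨h1, h2⟩
      · have hxPr : xP < lam.getD rh 0 := by rw [← h1]; exact hxP
        rw [hPeq, h1]; omega
      · have : (lam.drop (rP+1)).sum = (lam.drop rh).sum := by rw [← h1]
        rw [hPeq, this]; omega
    omega
  · -- rh = 0 or rh = 1
    have hrh01 : rh = 0 ∨ rh = 1 := by omega
    -- first: Q cannot be in row 0
    have hrQ1 : rQ = rh ∧ xh ≤ xQ := by
      rcases hQchar with h | ⟨h1, h2⟩
      · exact h
      · exfalso
        have hrQ0 : rQ = 0 := by omega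
        rw [hrQ0] at hQeq hxQ
        rw [hQeq] at hQ2
        have := val0 xQ hxQ
        omega
    rcases hrh01 with hrh0 | hrh1
    · -- rh = 0 : then Q is in row 0, impossible
      exfalso
      have hrQ0 : rQ = 0 := by omega
      rw [hrQ0] at hQeq hxQ
      rw [hQeq] at hQ2
      have := val0 xQ hxQ
      omega
    · -- rh = 1 : the interesting case
      subst hrh1
      have h1L : 1 < lam.length := hrhL
      have h0L : 0 < lam.length := by omega
      have hmu10 : lam.getD 1 0 ≤ lam.getD 0 0 := mu_anti hlam (by omega) h1L
      have hrQeq : rQ = 1 := hrQ1.1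
      rw [hrQeq] at hQeq hxQ
      rw [hQeq] at hQ2
      -- coordinates of R
      obtain ⟨rR, xR, hrR, hxR, hReq⟩ := pd_index lam R (by rw [← hlen]; exact hR1)
      have hQRc : rR < 1 ∨ (rR = 1 ∧ xQ < xR) := by
        have h := hQR
        rw [hQeq, hReq] at h
        exact (idx_lt_iff lam h1L hxQ hrR hxR).mp h
      have hrReq : rR = 1 ∧ xQ < xR := by
        rcases hQRc with h | h
        · exfalso
          have hrR0 : rR = 0 := by omega
          rw [hrR0] at hReq hxR
          rw [hReq] at hR2
          have := val0 xR hxR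
          omega
        · exact h
      rw [hrReq.1] at hReq hxR
      rw [hReq] at hR2
      -- coordinates of P'
      obtain ⟨rP', xP', hrP', hxP', hP'eq⟩ := pd_index lam P' (by rw [← hlen]; exact hP'1)
      have hQP'c : rP' < 1 ∨ (rP' = 1 ∧ xQ < xP') := by
        have h := hQP'
        rw [hQeq, hP'eq] at h
        exact (idx_lt_iff lam h1L hxQ hrP' hxP').mp h
      rcases Nat.lt_or_ge P' R with hPR | hPR
      · -- P' before R : immediate contradiction via triples
        exfalso
        have hrP'1 : rP' = 1 := by
          have h := hPR
          rw [hP'eq, hReq] at h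
          have := (idx_lt_iff lam hrP' hxP' h1L hxR).mp h
          omega
        rw [hrP'1] at hP'eq hxP'
        rw [hP'eq] at hP'2
        have hxQP' : xQ < xP' := by
          rcases hQP'c with h | h
          · omega
          · exact h.2
        have hxP'R : xP' < xR := by
          have h := hPR
          rw [hP'eq, hReq] at h
          have := (idx_lt_iff lam h1L hxP' h1L hxR).mp h
          omega
        have hbelowQ := hF1 i xQ xP' hxQP' hxP' hQ2 hP'2
        have hv0Q := val0 xQ (by omega)
        have hieq : i = 1 := by omega
        have hbelowP' := hF2 i xP' xR hxP'R hxR hP'2 hR2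
        have hv0P' := val0 xP' (by omega)
        omega
      · -- R before P' : produce a smaller jam and use induction
        have hPR' : R < P' := by omega
        -- i = 1
        have hieq : i = 1 := by
          rcases hQP'c with h | h
          · have hrP'0 : rP' = 0 := by omega
            rw [hrP'0] at hP'eq hxP'
            rw [hP'eq] at hP'2
            have := val0 xP' hxP'
            omega
          · rw [h.1] at hP'eq hxP'
            rw [hP'eq] at hP'2
            have hbelowQ := hF1 i xQ xP' h.2 hxP' hQ2 hP'2
            have hv0Q := val0 xQ (by omega)
            omega
        -- the descent: the cell below R
        have hxR0 : xR < lam.getD 0 0 := by omega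
        set M := (lam.drop (0+1)).sum + xR with hMdef
        have hMval : w.getD M 0 = 1 := val0 xR hxR0
        have hMsum : M < lam.sum := idx_bound lam h0L hxR0
        have hMlt : M < w.length := by rw [hlen]; exact hMsum
        set t := (w.drop M).count i with htdef
        have hMt : posFromLast w i t = M := posFromLast_eq w i hMlt (by rw [hMval, hieq])
        have ht1 : 1 ≤ t := by
          rw [htdef, count_drop_succ w i hMlt, if_pos (by rw [hMval, hieq])]
          omega
        have htle : t ≤ w.count i := by
          have := count_drop_le w i (Nat.zero_le M)
          rw [List.drop_zero] at this
          omega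
        -- P < M
        have hPM : P < M := by
          rcases hPchar with ⟨h1, h2⟩ | ⟨h1, h2⟩
          · rw [h1] at hPeq hxP
            rw [hPeq, hMdef]
            exact (idx_lt_iff lam h1L hxP h0L hxR0).mpr (Or.inl (by omega))
          · have hrP0 : rP = 0 := by omega
            rw [hrP0] at hPeq hxP
            rw [hPeq, hMdef]
            exact (idx_lt_iff lam h0L hxP h0L hxR0).mpr (Or.inr ⟨rfl, by omega⟩)
        have htj : t < j := by
          have hc1 := count_drop_le w i (show P + 1 ≤ M by omega)
          rw [count_drop_succ w i hP1, if_pos hP2] at hP3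
          omega
        -- the partner i+1
        obtain ⟨hU1, hU2, hU3⟩ := posFromLast_spec w (i+1) (t+1) (by omega) (by omega)
        have hRU := posFromLast_le w (i+1) (show 1 ≤ t + 1 by omega) (show t+1 ≤ j by omega)
          (by omega)
        have hUM : posFromLast w (i+1) (t+1) < M := by
          have h1 := yam_interlace hyam i (t+1) hi (by omega) (by omega) (by omega)
          have h2 : posFromLast w i (t+1) ≤ posFromLast w i t :=
            posFromLast_le w i ht1 (by omega) (by omega)
          rw [hMt] at h2
          omega
        set U := posFromLast w (i+1) (t+1) with hUdef
        -- coordinates of U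
        obtain ⟨rU, xU, hrU, hxU, hUeq⟩ := pd_index lam U (by rw [← hlen]; exact hU1)
        have hrU0 : rU ≠ 0 := by
          intro h0
          rw [h0] at hUeq hxU
          rw [hUeq] at hU2
          have := val0 xU hxU
          omega
        have hnotUR : ¬ (U < R) := by omega
        have hURc : ¬ (1 < rU ∨ (1 = rU ∧ xU < xR)) := by
          intro h
          apply hnotUR
          rw [hUeq, hReq]
          exact (idx_lt_iff lam hrU hxU h1L hxR).mpr (by tauto)
        have hrU1 : rU = 1 := by
          rcases Nat.lt_trichotomy rU 1 with h | h | h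
          · omega
          · exact h
          · exfalso; exact hURc (Or.inl h)
        have hxRU : xR ≤ xU := by
          by_contra h
          exact hURc (Or.inr ⟨hrU1.symm, by omega⟩)
        rw [hrU1] at hUeq hxU
        -- build the smaller jam
        have hgM : δ.getD M (0,0) = ((xR:ℤ), ((0:ℕ):ℤ)) := pd_getD lam 0 xR h0L hxR0
        have hgU : δ.getD U (0,0) = ((xU:ℤ), ((1:ℕ):ℤ)) := by
          rw [hUeq]; exact pd_getD lam 1 xU h1L hxU
        refine IH t htj i hi ht1 htle (by omega) ?_
        refine ⟨((xR:ℤ), ((1:ℕ):ℤ)), (pd_mem lam _).mpr ⟨1, xR, h1L, hxR, rfl⟩, ?_⟩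
        intro z hz
        simp only [List.mem_cons, List.mem_singleton, List.not_mem_nil, or_false] at hz
        rcases hz with rfl | rfl
        · refine ⟨?_, ?_⟩
          · rw [hMt, hδlen]; exact hMsum
          · rw [hMt, hgM]
            exact (inPistol_iff xR 1 xR 0).mpr (Or.inr ⟨by omega, le_refl _⟩)
        · refine ⟨?_, ?_⟩
          · rw [hδlen]; rw [← hlen]; exact hU1
          · rw [hgU]
            exact (inPistol_iff xR 1 xU 1).mpr (Or.inl ⟨rfl, hxRU⟩)

end No333

-- STATEMENT 15
theorem no333_no_jam (lam : List ℕ) (hlam : IsPartition lam)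
    (h333 : lam.getD 2 0 < 3)
    (lam' : List ℕ) (hlam' : IsPartition lam') (hsum : lam'.sum = lam.sum)
    (w : List ℕ) (hlen : w.length = lam.sum) (hyam : IsYam lam' w)
    (hinv : invD (partitionDiagram lam) w = 0) :
    ¬ Jams (partitionDiagram lam) w := by
  intro hJam
  obtain ⟨i, j, h1, h2, h3, h4, h5⟩ := hJam
  exact No333.no_jam_aux lam lam' hlam h333 w hlen hyam hinv j i h1 h2 h3 h4 h5
end

section
/- Let T be a standard filling of a partition diagram μ with inv(T) = 0 whose row reading word is a Yamanouchi word. Then the bottom row of T consists entirely of 1's, and the second row (from the bottom) consists of some number k ≥ 0 of 2's followed entirely by 1's. -/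
open scoped Classical

section Aux

lemma aux_flatMap_cast (l : List ℕ) :
    (l.flatMap fun a => [((a : ℕ) : ℤ)]) = l.map (fun a : ℕ => (a : ℤ)) := by
  induction l with
  | nil => rfl
  | cons a t ih => rw [List.flatMap_cons, List.map_cons, ih]; rfl

lemma aux_pd_eq (lam : List ℕ) : partitionDiagram lam =
    ((List.range lam.length).reverse.map fun r =>
      (List.range (lam.getD r 0)).map fun x : ℕ => ((x : ℤ), (r : ℤ))).flatten := by
  unfold partitionDiagram
  congr 1
  congr 1
  funext r
  show List.map _ ((List.range (lam.getD r 0)).flatMap fun a => [((a : ℕ) : ℤ)]) = _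
  rw [aux_flatMap_cast, List.map_map]
  rfl

lemma aux_sum_getD_range (l : List ℕ) :
    ((List.range l.length).map (fun i => l.getD i 0)).sum = l.sum := by
  induction l with
  | nil => simp
  | cons a t ih =>
    rw [List.length_cons, List.range_succ_eq_map]
    simp only [List.map_cons, List.map_map]
    simp only [List.sum_cons]
    rw [← ih]
    congr 1

lemma aux_getD_maprange (mm : ℕ) (y : ℤ) (x : ℕ) (hx : x < mm) :
    (((List.range mm).map fun t : ℕ => ((t : ℤ), y)).getD x ((0 : ℤ), (0 : ℤ)))
      = ((x : ℤ), y) := by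
  rw [List.getD_eq_getElem _ _ (by simpa using hx)]
  simp

lemma aux_diagram_split (lam : List ℕ) :
    ∃ Q : List (ℤ × ℤ),
      partitionDiagram lam =
        Q ++ ((List.range (lam.getD 1 0)).map fun x : ℕ => ((x : ℤ), (1 : ℤ)))
          ++ ((List.range (lam.getD 0 0)).map fun x : ℕ => ((x : ℤ), (0 : ℤ)))
      ∧ Q.length = lam.sum - lam.getD 0 0 - lam.getD 1 0
      ∧ ∀ c ∈ Q, (2 : ℤ) ≤ c.2 := by
  rw [aux_pd_eq]
  match lam with
  | [] => exact ⟨[], by simp, by simp, by simp⟩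
  | [a0] =>
    refine ⟨[], ?_, by simp, by simp⟩
    rw [show List.range [a0].length = [0] from rfl]
    simp
  | a0 :: a1 :: rest =>
    set f : ℕ → List (ℤ × ℤ) := fun r =>
      (List.range ((a0 :: a1 :: rest).getD r 0)).map fun x : ℕ => ((x : ℤ), (r : ℤ)) with hf
    have hrange : List.range (rest.length + 2) = [0, 1] ++ List.range' 2 rest.length := by
      rw [List.range_eq_range']
      rw [show [0,1] = List.range' 0 2 by rfl, List.range'_append, Nat.add_comm]
    refine ⟨((List.range' 2 rest.length).reverse.map f).flatten, ?_, ?_, ?_⟩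
    · rw [show (a0 :: a1 :: rest).length = rest.length + 2 by simp, hrange]
      simp only [List.reverse_append, List.map_append, List.flatten_append]
      rw [List.append_assoc]
      congr 1
      show (List.map f [1, 0]).flatten = _
      simp only [List.map_cons, List.map_nil, List.flatten]
      simp [hf]
    · simp only [List.length_flatten, List.map_reverse, List.sum_reverse, List.map_map]
      have h1 : (List.length ∘ f) = fun r => (a0 :: a1 :: rest).getD r 0 := by
        funext r
        simp only [Function.comp_apply, hf, List.length_map, List.length_range]
      rw [h1]
      have h2 : List.range' 2 rest.length = (List.range rest.length).map (· + 2) := by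
        rw [List.range'_eq_map_range]; simp [Nat.add_comm]
      rw [h2, List.map_map]
      have h3 : ((fun r => (a0 :: a1 :: rest).getD r 0) ∘ (· + 2))
          = fun i => rest.getD i 0 := by funext i; rfl
      rw [h3, aux_sum_getD_range]
      simp only [List.sum_cons, List.getD_cons_zero, List.getD_cons_succ]
      omega
    · intro c hc
      simp only [List.mem_flatten, List.mem_map, List.mem_reverse] at hc
      obtain ⟨l, ⟨r, hr, rfl⟩, hcl⟩ := hc
      rw [List.mem_range'] at hr
      obtain ⟨i, hi, rfl⟩ := hr
      simp only [hf, List.mem_map, List.mem_range] at hcl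
      obtain ⟨x, _, rfl⟩ := hcl
      show (2 : ℤ) ≤ ((2 + 1 * i : ℕ) : ℤ)
      push_cast; omega

lemma aux_ab_le (lam : List ℕ) : lam.getD 0 0 + lam.getD 1 0 ≤ lam.sum := by
  match lam with
  | [] => simp
  | [x] => simp
  | x :: y :: r => simp [List.getD]

lemma aux_b_le_a (lam : List ℕ) (h : IsPartition lam) : lam.getD 1 0 ≤ lam.getD 0 0 := by
  match lam with
  | [] => simp
  | [x] => simp
  | x :: y :: r =>
    have := (List.pairwise_cons.mp h.1).1 y (List.mem_cons_self (a := y) (l := r))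
    simpa [List.getD] using this

lemma aux_count_downclosed (b : ℕ) : ∀ (P : ℕ → Prop) [DecidablePred P],
    (∀ t' t, t' ≤ t → t < b → P t → P t') →
    ∀ t < b, (P t ↔ t < ((Finset.range b).filter P).card) := by
  induction b with
  | zero => intro P _ hdc t ht; omega
  | succ m ih =>
    intro P _ hdc
    have hsub : ∀ t' t, t' ≤ t → t < m → P t → P t' :=
      fun t' t h1 h2 => hdc t' t h1 (by omega)
    by_cases hPm : P m
    · have hall : ∀ t, t < m + 1 → P t := fun t ht => hdc t m (by omega) (by omega) hPm
      have heq : (Finset.range (m+1)).filter P = Finset.range (m+1) :=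
        Finset.filter_true_of_mem (by intro x hx; exact hall x (Finset.mem_range.mp hx))
      rw [heq, Finset.card_range]
      intro t ht
      exact ⟨fun _ => ht, fun _ => hall t ht⟩
    · have heq : (Finset.range (m+1)).filter P = (Finset.range m).filter P := by
        rw [Finset.range_add_one, Finset.filter_insert, if_neg hPm]
      rw [heq]
      intro t ht
      rcases Nat.lt_succ_iff_lt_or_eq.mp ht with h | heqtm
      · exact ih P hsub t h
      · rw [heqtm]
        constructor
        · intro h; exact absurd h hPm
        · intro h
          exfalso
          have hle : ((Finset.range m).filter P).card ≤ m := by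
            calc ((Finset.range m).filter P).card ≤ (Finset.range m).card :=
                  Finset.card_filter_le _ _
              _ = m := Finset.card_range m
          omega

end Aux

-- STATEMENT 16
theorem bottom_rows_structure (lam : List ℕ) (hlam : IsPartition lam)
    (w : List ℕ) (hlen : w.length = lam.sum)
    (hyam : ∃ lam' : List ℕ, IsPartition lam' ∧ IsYam lam' w)
    (hinv : invD (partitionDiagram lam) w = 0) :
    (∀ j, lam.sum - lam.getD 0 0 ≤ j → j < lam.sum → w.getD j 0 = 1) ∧
    ∃ k, k ≤ lam.getD 1 0 ∧
      ∀ j, lam.sum - lam.getD 0 0 - lam.getD 1 0 ≤ j → j < lam.sum - lam.getD 0 0 →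
        w.getD j 0 =
          if j < lam.sum - lam.getD 0 0 - lam.getD 1 0 + k then 2 else 1 := by
  obtain ⟨lam', -, hpos, -, hsuf⟩ := hyam
  have hwl : w.length = lam.sum := hlen
  have hab : lam.getD 0 0 + lam.getD 1 0 ≤ lam.sum := aux_ab_le lam
  have hba : lam.getD 1 0 ≤ lam.getD 0 0 := aux_b_le_a lam hlam
  obtain ⟨Q, hsplit, hQlen, hQ2⟩ := aux_diagram_split lam
  have hql : (Q ++ ((List.range (lam.getD 1 0)).map fun x : ℕ =>
      ((x : ℤ), (1 : ℤ)))).length = lam.sum - lam.getD 0 0 := by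
    rw [List.length_append, hQlen, List.length_map, List.length_range]
    omega
  have hdlen : (partitionDiagram lam).length = lam.sum := by
    rw [hsplit]
    simp only [List.length_append, hQlen, List.length_map, List.length_range]
    omega
  have hy0 : ∀ c ∈ partitionDiagram lam, (0 : ℤ) ≤ c.2 := by
    intro c hc
    rw [hsplit] at hc
    rcases List.mem_append.mp hc with hc | hc
    · rcases List.mem_append.mp hc with hc | hc
      · linarith [hQ2 c hc]
      · obtain ⟨x, -, rfl⟩ := List.mem_map.mp hc; norm_num
    · obtain ⟨x, -, rfl⟩ := List.mem_map.mp hc; norm_num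
  have hnm : ∀ x : ℤ, ((x, (-1 : ℤ)) : ℤ × ℤ) ∉ partitionDiagram lam := by
    intro x hx
    have := hy0 _ hx
    norm_num at this
  have hbot : ∀ m, lam.sum - lam.getD 0 0 ≤ m → m < lam.sum →
      (partitionDiagram lam).getD m ((0:ℤ), (0:ℤ))
        = (((m - (lam.sum - lam.getD 0 0) : ℕ) : ℤ), 0) := by
    intro m h1 h2
    rw [hsplit, List.getD_append_right _ _ _ _ (by rw [hql]; exact h1), hql]
    exact aux_getD_maprange _ _ _ (by omega)
  have hrow1 : ∀ m, lam.sum - lam.getD 0 0 - lam.getD 1 0 ≤ m →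
      m < lam.sum - lam.getD 0 0 →
      (partitionDiagram lam).getD m ((0:ℤ), (0:ℤ))
        = (((m - (lam.sum - lam.getD 0 0 - lam.getD 1 0) : ℕ) : ℤ), 1) := by
    intro m h1 h2
    rw [hsplit, List.append_assoc,
      List.getD_append_right _ _ _ _ (by rw [hQlen]; exact h1), hQlen,
      List.getD_append _ _ _ _ (by
        simp only [List.length_map, List.length_range]; omega)]
    exact aux_getD_maprange _ _ _ (by omega)
  obtain ⟨hA, hB⟩ :
      (((Finset.range (partitionDiagram lam).length ×ˢ
          Finset.range (partitionDiagram lam).length).filter fun p =>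
        InvTripleAt (partitionDiagram lam) w p.1 p.2).card = 0) ∧
      (((Finset.range (partitionDiagram lam).length ×ˢ
          Finset.range (partitionDiagram lam).length).filter fun p =>
        InvPairBelowAt (partitionDiagram lam) w p.1 p.2).card = 0) := by
    unfold invD at hinv
    omega
  have hTn : ∀ j k, ¬ InvTripleAt (partitionDiagram lam) w j k := by
    intro j k h
    have hk : k < (partitionDiagram lam).length := h.2.1
    have hj : j < (partitionDiagram lam).length := lt_trans h.1 hk
    have hmem : ((j, k) : ℕ × ℕ) ∈ (Finset.range (partitionDiagram lam).length ×ˢ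
        Finset.range (partitionDiagram lam).length).filter (fun p =>
          InvTripleAt (partitionDiagram lam) w p.1 p.2) :=
      Finset.mem_filter.mpr ⟨Finset.mem_product.mpr
        ⟨Finset.mem_range.mpr hj, Finset.mem_range.mpr hk⟩, h⟩
    rw [Finset.card_eq_zero] at hA
    rw [hA] at hmem
    exact absurd hmem (Finset.notMem_empty _)
  have hBn : ∀ j k, ¬ InvPairBelowAt (partitionDiagram lam) w j k := by
    intro j k h
    have hk : k < (partitionDiagram lam).length := h.2.1
    have hj : j < (partitionDiagram lam).length := lt_trans h.1 hk
    have hmem : ((j, k) : ℕ × ℕ) ∈ (Finset.range (partitionDiagram lam).length ×ˢ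
        Finset.range (partitionDiagram lam).length).filter (fun p =>
          InvPairBelowAt (partitionDiagram lam) w p.1 p.2) :=
      Finset.mem_filter.mpr ⟨Finset.mem_product.mpr
        ⟨Finset.mem_range.mpr hj, Finset.mem_range.mpr hk⟩, h⟩
    rw [Finset.card_eq_zero] at hB
    rw [hB] at hmem
    exact absurd hmem (Finset.notMem_empty _)
  have hge1 : ∀ j, j < w.length → 1 ≤ w.getD j 0 := by
    intro j hj
    rw [List.getD_eq_getElem _ _ hj]
    exact hpos _ (List.mem_iff_getElem.mpr ⟨j, hj, rfl⟩)
  have hkey : ∀ j v, j < w.length → 2 ≤ v → w.getD j 0 = v →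
      (∀ t, j ≤ t → t < w.length → w.getD t 0 ≠ v - 1) → False := by
    intro j v hj hv hval hnone
    have hsuffix := hsuf (w.drop j) (List.drop_suffix j w) (v - 2)
    have e1 : v - 2 + 2 = v := by omega
    have e2 : v - 2 + 1 = v - 1 := by omega
    rw [e1, e2] at hsuffix
    have hwj : w[j]'hj = v := by rw [← List.getD_eq_getElem w 0 hj]; exact hval
    have hc1 : 0 < (w.drop j).count v := by
      rw [List.count_pos_iff]
      refine List.mem_iff_getElem.mpr ⟨0, by rw [List.length_drop]; omega, ?_⟩
      rw [List.getElem_drop]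
      simpa using hwj
    have hc2 : (w.drop j).count (v - 1) = 0 := by
      rw [List.count_eq_zero]
      intro hmem
      obtain ⟨i, hilt, hi⟩ := List.mem_iff_getElem.mp hmem
      rw [List.getElem_drop] at hi
      have hji : j + i < w.length := by
        rw [List.length_drop] at hilt; omega
      exact hnone (j + i) (by omega) hji
        (by rw [List.getD_eq_getElem _ _ hji]; exact hi)
    omega
  have claim1 : ∀ j, lam.sum - lam.getD 0 0 ≤ j → j < lam.sum → w.getD j 0 = 1 := by
    intro j h1 h2
    have ha1 : 1 ≤ lam.getD 0 0 := by omega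
    have hlast : w.getD (lam.sum - 1) 0 = 1 := by
      by_contra hne
      have hlt : lam.sum - 1 < w.length := by omega
      have h2v : 2 ≤ w.getD (lam.sum - 1) 0 := by
        have := hge1 _ hlt; omega
      refine hkey _ _ hlt h2v rfl ?_
      intro t ht1 ht2 htv
      have hteq : t = lam.sum - 1 := by omega
      rw [hteq] at htv
      omega
    rcases eq_or_lt_of_le (show j ≤ lam.sum - 1 by omega) with heq | hlt'
    · rw [heq]; exact hlast
    · have hgj := hbot j h1 h2
      have hgk := hbot (lam.sum - 1) (by omega) (by omega)
      have hwle : ¬ (w.getD (lam.sum - 1) 0 < w.getD j 0) := by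
        intro hw
        refine hBn j (lam.sum - 1) ⟨hlt', by rw [hdlen]; omega, ?_, ?_, hw⟩
        · rw [hgj, hgk]
        · rw [hgj]
          simpa using hnm ((j - (lam.sum - lam.getD 0 0) : ℕ) : ℤ)
      have := hge1 j (by omega)
      omega
  refine ⟨claim1, ?_⟩
  have htr : ∀ j k, lam.sum - lam.getD 0 0 - lam.getD 1 0 ≤ j → j < k →
      k < lam.sum - lam.getD 0 0 → 2 ≤ w.getD k 0 →
      2 ≤ w.getD j 0 ∧ w.getD j 0 ≤ w.getD k 0 := by
    intro j k h1 h2 h3 h4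
    by_contra hcon
    apply hTn j k
    refine ⟨h2, by rw [hdlen]; omega, ?_, ?_⟩
    · rw [hrow1 j h1 (by omega), hrow1 k (by omega) h3]
    · refine ⟨(lam.sum - lam.getD 0 0) +
        (j - (lam.sum - lam.getD 0 0 - lam.getD 1 0)), by rw [hdlen]; omega, ?_, ?_⟩
      · rw [hbot _ (by omega) (by omega), hrow1 j h1 (by omega)]
        have e : (lam.sum - lam.getD 0 0) +
            (j - (lam.sum - lam.getD 0 0 - lam.getD 1 0)) - (lam.sum - lam.getD 0 0)
            = j - (lam.sum - lam.getD 0 0 - lam.getD 1 0) := by omega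
        rw [e]
        norm_num
      · have hwm : w.getD ((lam.sum - lam.getD 0 0) +
            (j - (lam.sum - lam.getD 0 0 - lam.getD 1 0))) 0 = 1 :=
          claim1 _ (by omega) (by omega)
        rw [hwm]
        have hj1 := hge1 j (by omega)
        omega
  have hle2 : ∀ j, lam.sum - lam.getD 0 0 - lam.getD 1 0 ≤ j →
      j < lam.sum - lam.getD 0 0 → w.getD j 0 ≤ 2 := by
    intro j h1 h2
    by_contra hgt
    push_neg at hgt
    refine hkey j (w.getD j 0) (by omega) (by omega) rfl ?_
    intro t ht1 ht2 htv
    rcases lt_or_ge t (lam.sum - lam.getD 0 0) with h | h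
    · rcases eq_or_lt_of_le ht1 with rfl | hlt
      · omega
      · have := htr j t h1 hlt h (by omega)
        omega
    · have := claim1 t h (by omega)
      omega
  refine ⟨((Finset.range (lam.getD 1 0)).filter fun t =>
      w.getD (lam.sum - lam.getD 0 0 - lam.getD 1 0 + t) 0 = 2).card,
    le_trans (Finset.card_filter_le _ _) (le_of_eq (Finset.card_range _)), ?_⟩
  intro j h1 h2
  have hdc : ∀ t' t, t' ≤ t → t < lam.getD 1 0 →
      w.getD (lam.sum - lam.getD 0 0 - lam.getD 1 0 + t) 0 = 2 →
      w.getD (lam.sum - lam.getD 0 0 - lam.getD 1 0 + t') 0 = 2 := by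
    intro t' t htt htb hPt
    rcases eq_or_lt_of_le htt with rfl | hlt
    · exact hPt
    · have h5 := htr (lam.sum - lam.getD 0 0 - lam.getD 1 0 + t')
        (lam.sum - lam.getD 0 0 - lam.getD 1 0 + t)
        (by omega) (by omega) (by omega) (by rw [hPt])
      have h6 := hle2 (lam.sum - lam.getD 0 0 - lam.getD 1 0 + t') (by omega) (by omega)
      omega
  have hiff := aux_count_downclosed (lam.getD 1 0)
    (fun t => w.getD (lam.sum - lam.getD 0 0 - lam.getD 1 0 + t) 0 = 2) hdc
    (j - (lam.sum - lam.getD 0 0 - lam.getD 1 0)) (by omega)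
  rw [show lam.sum - lam.getD 0 0 - lam.getD 1 0 +
    (j - (lam.sum - lam.getD 0 0 - lam.getD 1 0)) = j by omega] at hiff
  by_cases hc : j < lam.sum - lam.getD 0 0 - lam.getD 1 0 +
      ((Finset.range (lam.getD 1 0)).filter fun t =>
        w.getD (lam.sum - lam.getD 0 0 - lam.getD 1 0 + t) 0 = 2).card
  · rw [if_pos hc]
    exact hiff.mpr (by omega)
  · rw [if_neg hc]
    have hne : w.getD j 0 ≠ 2 := fun h => by
      have := hiff.mp h; omega
    have hg1 := hge1 j (by omega)
    have hl2 := hle2 j h1 h2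
    omega
end
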